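/- Let X be a real vector space equipped with two norms N and N' such that there exist constants c₁, c₂ > 0 with c₁·N(x) ≤ N'(x) ≤ c₂·N(x) for all x ∈ X. Let 0 ≤ L < 1, let Φ : X → X be L-Lipschitz with respect to N', and let x* ∈ X be a fixed point of Φ. Then for every x ∈ X, (c₁/(c₂(1+L))) · N(x − Φ(x)) ≤ N(x − x*) ≤ (c₂/(c₁(1−L))) · N(x − Φ(x)). -/
import Mathlib

/-- Two-sided error bound: if `N, N'` are norms on a real vector space `X`
with `c₁·N ≤ N' ≤ c₂·N` for constants `c₁, c₂ > 0`, `Φ : X → X` is `L`-Lipschitz with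
respect to `N'` with `0 ≤ L < 1`, and `x*` is a fixed point of `Φ`, then for every `x`,
`(c₁/(c₂(1+L))) ⬝ N(x − Φ(x)) ≤ N(x − x*) ≤ (c₂/(c₁(1−L))) ⬝ N(x − Φ(x))`. -/
theorem two_sided_error_bound_via_residual
    {X : Type*} [AddCommGroup X] [Module ℝ X]
    (N N' : Seminorm ℝ X)
    (hNdef : ∀ x : X, N x = 0 → x = 0) (hN'def : ∀ x : X, N' x = 0 → x = 0)
    (c₁ c₂ : ℝ) (hc₁ : 0 < c₁) (hc₂ : 0 < c₂)
    (hlow : ∀ x : X, c₁ * N x ≤ N' x) (hup : ∀ x : X, N' x ≤ c₂ * N x)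
    (L : ℝ) (hL0 : 0 ≤ L) (hL1 : L < 1)
    (Φ : X → X) (hΦ : ∀ x y : X, N' (Φ x - Φ y) ≤ L * N' (x - y))
    (xs : X) (hfix : Φ xs = xs) (x : X) :
    (c₁ / (c₂ * (1 + L))) * N (x - Φ x) ≤ N (x - xs) ∧
      N (x - xs) ≤ (c₂ / (c₁ * (1 - L))) * N (x - Φ x) := by
  have h1L : (0:ℝ) < 1 + L := by linarith
  have h1L' : (0:ℝ) < 1 - L := by linarith
  have hlip : N' (Φ x - xs) ≤ L * N' (x - xs) := by
    have := hΦ x xs; rwa [hfix] at this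
  -- residual bounds in N'
  have hres1 : N' (x - Φ x) ≤ (1 + L) * N' (x - xs) := by
    have h := map_sub_le_add N' (x - xs) (Φ x - xs)
    have e : (x - xs) - (Φ x - xs) = x - Φ x := by abel
    rw [e] at h
    calc N' (x - Φ x) ≤ N' (x - xs) + N' (Φ x - xs) := h
      _ ≤ N' (x - xs) + L * N' (x - xs) := by linarith
      _ = (1 + L) * N' (x - xs) := by ring
  have hres2 : (1 - L) * N' (x - xs) ≤ N' (x - Φ x) := by
    have h := map_sub_le_add N' (x - Φ x) (xs - Φ x)
    have e : (x - Φ x) - (xs - Φ x) = x - xs := by abel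
    rw [e] at h
    have e2 : xs - Φ x = -(Φ x - xs) := by abel
    have : N' (xs - Φ x) ≤ L * N' (x - xs) := by rw [e2, map_neg_eq_map]; exact hlip
    nlinarith
  constructor
  · rw [div_mul_eq_mul_div, div_le_iff₀ (by positivity)]
    have h1 : c₁ * N (x - Φ x) ≤ N' (x - Φ x) := hlow _
    have h2 : N' (x - xs) ≤ c₂ * N (x - xs) := hup _
    nlinarith
  · rw [div_mul_eq_mul_div, le_div_iff₀ (by positivity)]
    have h1 : c₁ * N (x - xs) ≤ N' (x - xs) := hlow _
    have h2 : N' (x - Φ x) ≤ c₂ * N (x - Φ x) := hup _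
    nlinarith
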